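/- For every 2-coloring of the edges of K_N (N ≥ 3), the number of monochromatic triangles is at least C(N,3) − floor((N/2) · floor((N−1)²/4)). -/

import Mathlib

/-- The set of monochromatic triangles of a 2-coloring `col` of the edges of
the complete graph on `Fin N`. -/
def monoTriangles {N : ℕ} (col : Fin N → Fin N → Bool) : Finset (Finset (Fin N)) :=
  (Finset.univ.powersetCard 3).filter
    (fun s => (∀ i ∈ s, ∀ j ∈ s, i ≠ j → col i j = true) ∨
              (∀ i ∈ s, ∀ j ∈ s, i ≠ j → col i j = false))

section
open Finset
variable {N : ℕ} (col : Fin N → Fin N → Bool)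

def angSet : Finset (Fin N × Fin N × Fin N) :=
  Finset.univ.filter (fun t => t.1 ≠ t.2.1 ∧ t.1 ≠ t.2.2 ∧
    col t.1 t.2.1 = true ∧ col t.1 t.2.2 = false)

def nonmonoSet : Finset (Finset (Fin N)) :=
  (Finset.univ.powersetCard 3).filter
    (fun s => ¬((∀ i ∈ s, ∀ j ∈ s, i ≠ j → col i j = true) ∨
              (∀ i ∈ s, ∀ j ∈ s, i ≠ j → col i j = false)))

lemma angSet_card_le : (angSet col).card ≤ N * ((N - 1) ^ 2 / 4) := by
  have hcard : (angSet col).card = ∑ v : Fin N,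
      ((Finset.univ.filter (fun i => i ≠ v ∧ col v i = true)).card *
       (Finset.univ.filter (fun j => j ≠ v ∧ col v j = false)).card) := by
    rw [Finset.card_eq_sum_card_fiberwise (f := fun t => t.1) (t := Finset.univ) (by simp)]
    refine Finset.sum_congr rfl fun v _ => ?_
    rw [← Finset.card_product]
    apply Finset.card_nbij' (i := fun t => (t.2.1, t.2.2)) (j := fun p => (v, p.1, p.2))
    · rintro ⟨w, i, j⟩ ht
      change (w, i, j) ∈ (angSet col).filter (fun t => t.1 = v) at ht
      show (i, j) ∈ (Finset.univ.filter (fun i => i ≠ v ∧ col v i = true)) ×ˢ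
        (Finset.univ.filter (fun j => j ≠ v ∧ col v j = false))
      simp only [angSet, Finset.mem_filter, Finset.mem_univ, true_and, Finset.mem_product] at ht ⊢
      obtain ⟨⟨h1, h2, h3, h4⟩, rfl⟩ := ht
      exact ⟨⟨h1.symm, h3⟩, ⟨h2.symm, h4⟩⟩
    · rintro ⟨i, j⟩ hp
      change (i, j) ∈ (Finset.univ.filter (fun i => i ≠ v ∧ col v i = true)) ×ˢ
        (Finset.univ.filter (fun j => j ≠ v ∧ col v j = false)) at hp
      show (v, i, j) ∈ (angSet col).filter (fun t => t.1 = v)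
      simp only [angSet, Finset.mem_filter, Finset.mem_univ, true_and, Finset.mem_product] at hp ⊢
      exact ⟨⟨hp.1.1.symm, hp.2.1.symm, hp.1.2, hp.2.2⟩, trivial⟩
    · rintro ⟨w, i, j⟩ ht
      change (w, i, j) ∈ (angSet col).filter (fun t => t.1 = v) at ht
      simp only [angSet, Finset.mem_filter, Finset.mem_univ, true_and] at ht
      obtain ⟨_, rfl⟩ := ht
      rfl
    · rintro ⟨i, j⟩ _; rfl
  rw [hcard]
  calc ∑ v : Fin N, _ ≤ ∑ _v : Fin N, (N - 1) ^ 2 / 4 := by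
        refine Finset.sum_le_sum fun v _ => ?_
        set a := (Finset.univ.filter (fun i => i ≠ v ∧ col v i = true)).card with ha
        set b := (Finset.univ.filter (fun j => j ≠ v ∧ col v j = false)).card with hb
        have hab : a + b = N - 1 := by
          have h0 := Finset.card_filter_add_card_filter_not
            (s := Finset.univ.filter (fun i : Fin N => i ≠ v)) (p := fun i => col v i = true)
          rw [Finset.filter_filter, Finset.filter_filter] at h0
          have h1 : (Finset.univ.filter (fun i : Fin N => i ≠ v)).card = N - 1 := by
            rw [Finset.filter_ne' , Finset.card_erase_of_mem (Finset.mem_univ v)]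
            simp
          simp only [Bool.not_eq_true] at h0
          rw [ha, hb]
          rw [← h1, ← h0]
        rw [Nat.le_div_iff_mul_le (by norm_num)]
        nlinarith [sq_nonneg ((a : ℤ) - b), hab]
      _ = N * ((N - 1) ^ 2 / 4) := by simp [mul_comm]

lemma fiber_card (hsym : ∀ i j, col i j = col j i) (s : Finset (Fin N))
    (hs : s ∈ nonmonoSet col) :
    ((angSet col).filter (fun t => ({t.1, t.2.1, t.2.2} : Finset (Fin N)) = s)).card = 2 := by
  rw [nonmonoSet, Finset.mem_filter, Finset.mem_powersetCard_univ] at hs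
  obtain ⟨hcard, hns⟩ := hs
  obtain ⟨a, b, c, hab, hac, hbc, rfl⟩ := Finset.card_eq_three.mp hcard
  -- symmetric color facts
  have hba := hsym b a
  have hca := hsym c a
  have hcb := hsym c b
  -- the fiber equals an explicit filter over the 6 permutations
  have hset : (angSet col).filter
        (fun t => ({t.1, t.2.1, t.2.2} : Finset (Fin N)) = {a, b, c})
      = ({(a,b,c),(a,c,b),(b,a,c),(b,c,a),(c,a,b),(c,b,a)} :
          Finset (Fin N × Fin N × Fin N)).filter
          (fun t => col t.1 t.2.1 = true ∧ col t.1 t.2.2 = false) := by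
    ext ⟨v, i, j⟩
    simp only [angSet, Finset.mem_filter, Finset.mem_univ, true_and, Finset.mem_insert,
      Finset.mem_singleton, Prod.mk.injEq]
    constructor
    · rintro ⟨⟨hvi, hvj, hci, hcj⟩, hseq⟩
      have hij : i ≠ j := by rintro rfl; rw [hci] at hcj; exact absurd hcj (by simp)
      have hv : v = a ∨ v = b ∨ v = c := by
        have := hseq ▸ (Finset.mem_insert_self v {i, j}); simpa using this
      have hi : i = a ∨ i = b ∨ i = c := by
        have := hseq ▸ (Finset.mem_insert_of_mem (Finset.mem_insert_self i {j}))
        simpa using this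
      have hj : j = a ∨ j = b ∨ j = c := by
        have : j ∈ ({a,b,c} : Finset (Fin N)) := hseq ▸ (by simp)
        simpa using this
      refine ⟨?_, hci, hcj⟩
      clear hci hcj hba hca hcb hns hcard hseq hsym
      rcases hv with rfl | rfl | rfl <;> rcases hi with rfl | rfl | rfl <;>
        rcases hj with rfl | rfl | rfl <;> simp_all
    · rintro ⟨h6, hci, hcj⟩
      have hij : i ≠ j := by rintro rfl; rw [hci] at hcj; exact absurd hcj (by simp)
      rcases h6 with ⟨rfl,rfl,rfl⟩|⟨rfl,rfl,rfl⟩|⟨rfl,rfl,rfl⟩|⟨rfl,rfl,rfl⟩|⟨rfl,rfl,rfl⟩|⟨rfl,rfl,rfl⟩ <;>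
        refine ⟨⟨?_, ?_, hci, hcj⟩, ?_⟩ <;>
        first
        | assumption
        | exact hab.symm
        | exact hac.symm
        | exact hbc.symm
        | (ext x; simp; try tauto)
  rw [hset]
  -- rule out monochromatic
  have hT : ¬(col a b = true ∧ col a c = true ∧ col b c = true) := by
    rintro ⟨h1, h2, h3⟩
    refine hns (Or.inl ?_)
    intro i hi j hj hij
    simp only [Finset.mem_insert, Finset.mem_singleton] at hi hj
    rcases hi with rfl | rfl | rfl <;> rcases hj with rfl | rfl | rfl <;>
      first | exact absurd rfl hij | assumption | (rw [hsym]; assumption)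
  have hF : ¬(col a b = false ∧ col a c = false ∧ col b c = false) := by
    rintro ⟨h1, h2, h3⟩
    refine hns (Or.inr ?_)
    intro i hi j hj hij
    simp only [Finset.mem_insert, Finset.mem_singleton] at hi hj
    rcases hi with rfl | rfl | rfl <;> rcases hj with rfl | rfl | rfl <;>
      first | exact absurd rfl hij | assumption | (rw [hsym]; assumption)
  rcases hx : col a b <;> rcases hy : col a c <;> rcases hz : col b c <;>
    [exact absurd ⟨hx, hy, hz⟩ hF; skip; skip; skip; skip; skip; skip;
     exact absurd ⟨hx, hy, hz⟩ hT] <;>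
    simp [Finset.filter_insert, Finset.filter_singleton, hx, hy, hz, hba, hca, hcb,
      Finset.card_insert_of_notMem, Prod.ext_iff, hab, hac, hbc,
      hab.symm, hac.symm, hbc.symm, Ne.symm hab, Ne.symm hac, Ne.symm hbc]

lemma two_mul_nonmono (hsym : ∀ i j, col i j = col j i) :
    2 * (nonmonoSet col).card = (angSet col).card := by
  have hmap : ∀ t ∈ angSet col,
      ({t.1, t.2.1, t.2.2} : Finset (Fin N)) ∈ nonmonoSet col := by
    rintro ⟨v, i, j⟩ ht
    simp only [angSet, Finset.mem_filter, Finset.mem_univ, true_and] at ht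
    obtain ⟨hvi, hvj, hci, hcj⟩ := ht
    have hij : i ≠ j := by rintro rfl; rw [hci] at hcj; exact absurd hcj (by simp)
    rw [nonmonoSet, Finset.mem_filter, Finset.mem_powersetCard_univ]
    constructor
    · exact Finset.card_eq_three.mpr ⟨v, i, j, hvi, hvj, hij, rfl⟩
    · rintro (h | h)
      · have := h j (by simp) v (by simp) hvj.symm
        rw [hsym] at this; rw [this] at hcj; exact absurd hcj (by simp)
      · have := h v (by simp) i (by simp) hvi
        rw [this] at hci; exact absurd hci (by simp)
  rw [Finset.card_eq_sum_card_fiberwise hmap]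
  rw [Finset.sum_congr rfl (fun s hs => fiber_card col hsym s hs), Finset.sum_const,
    smul_eq_mul, mul_comm]

end

/-- Schwenk's form of Goodman's formula: every 2-coloring of the
edges of `K_N`, `N ≥ 3`, has at least `C(N,3) − ⌊(N/2)·⌊(N−1)²/4⌋⌋`
monochromatic triangles.  (Here `⌊(N/2)·⌊(N−1)²/4⌋⌋ = N * ((N-1)^2 / 4) / 2`
using natural-number division.) -/
theorem goodman_schwenk (N : ℕ) (hN : 3 ≤ N)
    (col : Fin N → Fin N → Bool)
    (hsym : ∀ i j, col i j = col j i) :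
    N.choose 3 - N * ((N - 1) ^ 2 / 4) / 2 ≤ (monoTriangles col).card := by
  have h1 : (monoTriangles col).card + (nonmonoSet col).card
      = ((Finset.univ : Finset (Fin N)).powersetCard 3).card :=
    Finset.card_filter_add_card_filter_not _
  have h2 : ((Finset.univ : Finset (Fin N)).powersetCard 3).card = N.choose 3 := by
    simp [Finset.card_powersetCard]
  have h3 := two_mul_nonmono col hsym
  have h4 := angSet_card_le col
  have h5 : (nonmonoSet col).card ≤ N * ((N - 1) ^ 2 / 4) / 2 := by
    rw [Nat.le_div_iff_mul_le (by norm_num)]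
    omega
  omega
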